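/- Let R be a commutative Noetherian ring, and let M and N be finitely generated R-modules satisfying Serre's conditions S_2 and S_1 respectively. If φ: M → N is an R-module homomorphism such that the localization φ_p is an isomorphism for every prime ideal p of R with height p ≤ 1, then φ is an isomorphism. -/

import Mathlib

/-!  Common definitions: Koszul homology, grade, depth, Cohen-Macaulay,
Gorenstein, Serre conditions, Ext modules. -/

open CategoryTheory

universe u v

noncomputable section

namespace Paper

/-- Degree-`j` part of the Koszul complex on `ℓ` elements, with coefficients in `M`,
modeled as functions on the set of subsets of `Fin ℓ` of cardinality `j` (`j : ℤ`). -/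
abbrev KoszulChains (ℓ : ℕ) (M : Type v) (j : ℤ) : Type v :=
  {s : Finset (Fin ℓ) // (s.card : ℤ) = j} → M

/-- The Koszul differential `K_{j+1}(y; M) → K_j(y; M)`:
`(d f)(S) = ∑_{t ∉ S} (-1)^{#{k ∈ S | k < t}} y_t • f (S ∪ {t})`. -/
def koszulD {R : Type u} [CommRing R] {ℓ : ℕ} (y : Fin ℓ → R)
    (M : Type v) [AddCommGroup M] [Module R M] (j : ℤ) :
    KoszulChains ℓ M (j + 1) →ₗ[R] KoszulChains ℓ M j where
  toFun f S := ∑ t ∈ S.1ᶜ.attach,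
    ((-1 : R) ^ ((S.1.filter (fun k => k < t.1)).card) * y t.1) •
      f ⟨insert t.1 S.1, by
        have ht : (t : Fin ℓ) ∉ S.1 := Finset.mem_compl.mp t.2
        rw [Finset.card_insert_of_notMem ht]
        push_cast
        rw [S.2]⟩
  map_add' f g := by
    funext S
    simp only [Pi.add_apply]
    rw [← Finset.sum_add_distrib]
    exact Finset.sum_congr rfl fun t _ => by rw [smul_add]
  map_smul' r f := by
    funext S
    simp only [Pi.smul_apply, RingHom.id_apply]
    rw [Finset.smul_sum]
    exact Finset.sum_congr rfl fun t _ => by rw [smul_comm]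

/-- The `j`-th Koszul homology of the sequence `y` with coefficients in `M`
(`H_j = 0` for `j < 0` or `j > ℓ` automatically). -/
abbrev koszulHomology {R : Type u} [CommRing R] {ℓ : ℕ} (y : Fin ℓ → R)
    (M : Type v) [AddCommGroup M] [Module R M] (j : ℤ) : Type v :=
  ↥(LinearMap.ker (koszulD y M (j - 1))) ⧸
    (Submodule.comap (LinearMap.ker (koszulD y M (j - 1))).subtype
      (LinearMap.range (koszulD y M (j - 1 + 1))))

/-- `Ext^n_R(A, B)` as an `R`-module (via the derived functor `Ext` of Mathlib). -/
abbrev ExtRMod (R : Type u) [CommRing R] (n : ℕ) (A B : Type u)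
    [AddCommGroup A] [Module R A] [AddCommGroup B] [Module R B] : Type u :=
  ((Ext R (ModuleCat.{u} R) n).obj (Opposite.op (ModuleCat.of R A))).obj (ModuleCat.of R B)

/-- The grade of an ideal: the supremum of the lengths of `R`-regular sequences
contained in it. -/
def idealGrade {R : Type u} [CommRing R] (I : Ideal R) : ℕ∞ :=
  ⨆ (rs : List R) (_ : ∀ r ∈ rs, r ∈ I) (_ : RingTheory.Sequence.IsRegular R rs),
    (rs.length : ℕ∞)

/-- The minimal number of generators of an ideal. -/
def minGens {R : Type u} [CommRing R] (I : Ideal R) : ℕ :=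
  sInf {n : ℕ | ∃ f : Fin n → R, Ideal.span (Set.range f) = I}

/-- The depth of a module over a local ring: the supremum of the lengths of
(weakly) regular sequences on `M` contained in the maximal ideal.  (For finitely
generated modules over a Noetherian local ring this is the usual depth, and the
zero module has depth `⊤`.) -/
def moduleDepth (R : Type u) [CommRing R] [IsLocalRing R]
    (M : Type v) [AddCommGroup M] [Module R M] : ℕ∞ :=
  ⨆ (rs : List R) (_ : ∀ r ∈ rs, r ∈ IsLocalRing.maximalIdeal R)
    (_ : RingTheory.Sequence.IsWeaklyRegular M rs), (rs.length : ℕ∞)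

/-- Depth, viewed in `WithTop ℤ` (to allow comparison with possibly negative
integer bounds). -/
def depthZ (R : Type u) [CommRing R] [IsLocalRing R]
    (M : Type v) [AddCommGroup M] [Module R M] : WithTop ℤ :=
  (moduleDepth R M).map (fun n : ℕ => (n : ℤ))

/-- The (Krull) dimension of a module: the Krull dimension of `R / ann M`. -/
def moduleDim (R : Type u) [CommRing R] (M : Type v) [AddCommGroup M] [Module R M] :
    WithBot ℕ∞ :=
  ringKrullDim (R ⧸ Module.annihilator R M)

/-- A module over a (Noetherian) local ring is Cohen-Macaulay if it is zero or its
depth equals its dimension. -/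
def IsCMModule (R : Type u) [CommRing R] [IsLocalRing R]
    (M : Type v) [AddCommGroup M] [Module R M] : Prop :=
  Subsingleton M ∨ (moduleDepth R M : WithBot ℕ∞) = moduleDim R M

/-- A module over a commutative ring is Cohen-Macaulay if all its localizations at
primes are Cohen-Macaulay. -/
def IsCMModuleGlobal (R : Type u) [CommRing R]
    (M : Type v) [AddCommGroup M] [Module R M] : Prop :=
  ∀ (p : Ideal R) [p.IsPrime],
    IsCMModule (Localization.AtPrime p) (LocalizedModule p.primeCompl M)

/-- A Cohen-Macaulay ring: a Noetherian commutative ring all of whose localizations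
at primes have depth equal to their Krull dimension. -/
def IsCMRing (R : Type u) [CommRing R] : Prop :=
  IsNoetherianRing R ∧ ∀ (p : Ideal R) [p.IsPrime],
    (moduleDepth (Localization.AtPrime p) (Localization.AtPrime p) : WithBot ℕ∞) =
      ringKrullDim (Localization.AtPrime p)

/-- `B` has finite injective dimension as an `R`-module: all sufficiently high
`Ext`s into `B` vanish. -/
def HasFiniteInjDim (R : Type u) [CommRing R] (B : Type u) [AddCommGroup B] [Module R B] :
    Prop :=
  ∃ n : ℕ, ∀ (M : Type u) [AddCommGroup M] [Module R M], ∀ k : ℕ, n < k →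
    Subsingleton (ExtRMod R k M B)

/-- A Gorenstein ring: a Noetherian commutative ring which, locally at every prime,
has finite injective dimension over itself. -/
def IsGorensteinRing (R : Type u) [CommRing R] : Prop :=
  IsNoetherianRing R ∧ ∀ (p : Ideal R) [p.IsPrime],
    HasFiniteInjDim (Localization.AtPrime p) (Localization.AtPrime p)

/-- A maximal Cohen-Macaulay module: finitely generated, with
`depth M_p = dim R_p` at every prime `p`. -/
def IsMCM (R : Type u) [CommRing R] (M : Type u) [AddCommGroup M] [Module R M] : Prop :=
  Module.Finite R M ∧ ∀ (p : Ideal R) [p.IsPrime],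
    (moduleDepth (Localization.AtPrime p) (LocalizedModule p.primeCompl M) : WithBot ℕ∞) =
      ringKrullDim (Localization.AtPrime p)

/-- Serre's condition `S_n` for an `R`-module `M`:
`depth M_p ≥ min(n, dim R_p)` for every prime `p`. -/
def SerreSn (R : Type u) [CommRing R] (M : Type v) [AddCommGroup M] [Module R M]
    (n : ℕ) : Prop :=
  ∀ (p : Ideal R) [p.IsPrime],
    min (n : WithBot ℕ∞) (ringKrullDim (Localization.AtPrime p)) ≤
      (moduleDepth (Localization.AtPrime p) (LocalizedModule p.primeCompl M) : WithBot ℕ∞)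

/-- Serre's condition `S_n` for an `R`-module `M` regarded as a module over `R/I`
(for `M` annihilated by `I`): expressed via the primes `p ⊇ I` of `R`, using that
`(R/I)_p = R_p/I R_p` and that depth over `(R/I)_p` agrees with depth over `R_p`. -/
def SerreSnQuot {R : Type u} [CommRing R] (I : Ideal R)
    (M : Type v) [AddCommGroup M] [Module R M] (n : ℕ) : Prop :=
  ∀ (p : Ideal R) [p.IsPrime], I ≤ p →
    min (n : WithBot ℕ∞)
        (ringKrullDim ((Localization.AtPrime p) ⧸
          (I.map (algebraMap R (Localization.AtPrime p))))) ≤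
      (moduleDepth (Localization.AtPrime p) (LocalizedModule p.primeCompl M) : WithBot ℕ∞)


/-- The `h`-sliding depth condition `SD_h` for the Koszul homology of the sequence `y`
(where `d = dim R`, `g = grade` of the ideal generated by `y`, and `ℓ` is the length
of `y`): `depth H_i ≥ min(d - g, d - ℓ + i + h)` for all `i`. -/
def SDCond {R : Type u} [CommRing R] [IsLocalRing R] {ℓ : ℕ} (y : Fin ℓ → R)
    (d g h : ℕ) : Prop :=
  ∀ i : ℕ, ((min ((d : ℤ) - g) ((d : ℤ) - ℓ + i + h) : ℤ) : WithTop ℤ) ≤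
    depthZ R (koszulHomology y R (i : ℤ))

end Paper

end


section Aux

open Paper RingTheory.Sequence Pointwise

variable {R : Type u} [CommRing R]

lemma aux_mem_ann {M : Type v} [AddCommGroup M] [Module R M] {x : M} {r : R} :
    r ∈ (R ∙ x).annihilator ↔ r ∈ (⊥ : Submodule R M).colon {x} := by
  rw [Submodule.mem_annihilator_span_singleton, Submodule.mem_colon_singleton, Submodule.mem_bot]

/-- Depth at an associated prime is zero. -/
lemma aux_depth_le_zero [IsNoetherianRing R] {p : Ideal R} [p.IsPrime]
    {M : Type v} [AddCommGroup M] [Module R M] (hp : IsAssociatedPrime p M) :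
    moduleDepth (Localization.AtPrime p) (LocalizedModule p.primeCompl M) ≤ 0 := by
  obtain ⟨hprime, x, hx⟩ := isAssociatedPrime_iff.mp hp
  set R' := Localization.AtPrime p
  set M' := LocalizedModule p.primeCompl M
  set ξ : M' := LocalizedModule.mk x 1 with hξdef
  have hξ : ξ ≠ 0 := by
    intro h
    rw [hξdef, ← LocalizedModule.zero_mk (1 : p.primeCompl), LocalizedModule.mk_eq] at h
    obtain ⟨u, hu⟩ := h
    simp only [one_smul, smul_zero, Submonoid.smul_def] at hu
    have hmem : (u : R) ∈ (Submodule.span R {x}).annihilator :=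
      (Submodule.mem_annihilator_span_singleton _ _).mpr hu
    rw [aux_mem_ann, ← hx] at hmem
    exact u.2 hmem
  have hann : IsLocalRing.maximalIdeal R' ≤ (Submodule.span R' {ξ}).annihilator := by
    rw [← Localization.AtPrime.map_eq_maximalIdeal, Ideal.map_le_iff_le_comap]
    intro z hz
    rw [Ideal.mem_comap, Submodule.mem_annihilator_span_singleton, algebraMap_smul, hξdef,
      LocalizedModule.smul'_mk]
    have hzx : z • x = 0 := by
      rw [← Submodule.mem_annihilator_span_singleton, aux_mem_ann, ← hx]; exact hz
    rw [hzx, LocalizedModule.zero_mk]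
  refine iSup_le fun rs => iSup_le fun hmem => iSup_le fun hreg => ?_
  match rs with
  | [] => simp
  | r :: t =>
    exfalso
    have hr := ((isWeaklyRegular_cons_iff M' r t).mp hreg).1
    have h0 : r • ξ = 0 :=
      (Submodule.mem_annihilator_span_singleton _ _).mp
        (hann (hmem r List.mem_cons_self))
    exact hξ (hr (show r • ξ = r • 0 by rw [h0, smul_zero]))

/-- Extract a weakly regular sequence of prescribed length from a depth bound. -/
lemma aux_exists_seq (R' : Type u) [CommRing R'] [IsLocalRing R']
    (M' : Type v) [AddCommGroup M'] [Module R' M'] (k : ℕ) (hk0 : 0 < k)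
    (h : (k : ℕ∞) ≤ moduleDepth R' M') :
    ∃ rs : List R', (∀ r ∈ rs, r ∈ IsLocalRing.maximalIdeal R') ∧
      RingTheory.Sequence.IsWeaklyRegular M' rs ∧ k ≤ rs.length := by
  by_contra hc
  push_neg at hc
  have hle : moduleDepth R' M' ≤ ((k - 1 : ℕ) : ℕ∞) := by
    refine iSup_le fun rs => iSup_le fun h1 => iSup_le fun h2 => ?_
    have := hc rs h1 h2
    exact_mod_cast Nat.le_sub_one_of_lt this
  have hkk : (k : ℕ∞) ≤ ((k - 1 : ℕ) : ℕ∞) := le_trans h hle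
  rw [Nat.cast_le] at hkk
  omega

lemma aux_two_le {x : WithBot ℕ∞} (h : 1 < x) : (2 : WithBot ℕ∞) ≤ x := by
  cases x with
  | bot => exact absurd h (by simp)
  | coe d =>
    have h1 : (1 : ℕ∞) < d := by exact_mod_cast h
    have h2 : (2 : ℕ∞) ≤ d := by
      have := Order.add_one_le_of_lt h1
      simpa [one_add_one_eq_two] using this
    rw [show (2 : WithBot ℕ∞) = ((2 : ℕ∞) : WithBot ℕ∞) from rfl]
    exact WithBot.coe_le_coe.mpr h2

end Aux

open Pointwise

open Paper in
/-- A map between an `S_2` module and an `S_1` module which is an isomorphism in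
codimension at most one is an isomorphism. -/
theorem stmt4 {R : Type u} [CommRing R] [IsNoetherianRing R]
    {M N : Type u} [AddCommGroup M] [Module R M] [AddCommGroup N] [Module R N]
    [Module.Finite R M] [Module.Finite R N]
    (hM : SerreSn R M 2) (hN : SerreSn R N 1) (φ : M →ₗ[R] N)
    (hloc : ∀ (p : Ideal R) [p.IsPrime],
      ringKrullDim (Localization.AtPrime p) ≤ (1 : WithBot ℕ∞) →
        Function.Bijective ⇑(LocalizedModule.map p.primeCompl φ)) :
    Function.Bijective ⇑φ := by
  classical
  -- Step 1: injectivity.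
  have hinj : Function.Injective ⇑φ := by
    rw [← LinearMap.ker_eq_bot]
    by_contra hker
    haveI : Nontrivial ↥(LinearMap.ker φ) :=
      (Submodule.nontrivial_iff_ne_bot).mpr hker
    obtain ⟨p, hp⟩ := associatedPrimes.nonempty R ↥(LinearMap.ker φ)
    haveI : p.IsPrime := hp.isPrime
    have hpM : IsAssociatedPrime p M :=
      hp.map_of_injective (LinearMap.ker φ).subtype Subtype.val_injective
    -- the depth of M at p is zero, hence dim R_p ≤ 1
    have hdepth := aux_depth_le_zero hpM
    have hmin := hM p
    have hdim : ringKrullDim (Localization.AtPrime p) ≤ (1 : WithBot ℕ∞) := by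
      have h0 : (moduleDepth (Localization.AtPrime p)
          (LocalizedModule p.primeCompl M) : WithBot ℕ∞) ≤ (0 : WithBot ℕ∞) := by
        exact_mod_cast hdepth
      have := le_trans hmin h0
      rcases min_le_iff.mp this with h | h
      · exact absurd h (by norm_num)
      · exact le_trans h (by norm_num)
    have hbij := hloc p hdim
    -- produce a nonzero element of the localized kernel
    obtain ⟨-, x, hx⟩ := isAssociatedPrime_iff.mp hp
    have hζ : (LocalizedModule.map p.primeCompl φ)
        (LocalizedModule.mk (x : M) 1) = 0 := by
      rw [LocalizedModule.map_mk]
      have : φ (x : M) = 0 := x.2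
      rw [this, LocalizedModule.zero_mk]
    have hx0 : (LocalizedModule.mk (x : M) (1 : p.primeCompl)
        : LocalizedModule p.primeCompl M) = 0 := by
      have := hbij.injective (a₁ := LocalizedModule.mk (x : M) 1) (a₂ := 0)
      simpa [hζ] using this
    rw [← LocalizedModule.zero_mk (1 : p.primeCompl), LocalizedModule.mk_eq] at hx0
    obtain ⟨u, hu⟩ := hx0
    simp only [one_smul, smul_zero, Submonoid.smul_def] at hu
    have hux : (u : R) • x = 0 := Subtype.ext hu
    have humem : (u : R) ∈ (R ∙ x).annihilator :=
      (Submodule.mem_annihilator_span_singleton _ _).mpr hux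
    rw [aux_mem_ann, ← hx] at humem
    exact u.2 humem
  refine ⟨hinj, ?_⟩
  -- Step 2: surjectivity.
  rw [← LinearMap.range_eq_top]
  by_contra hne
  haveI : Nontrivial (N ⧸ LinearMap.range φ) :=
    Submodule.Quotient.nontrivial_iff.mpr hne
  obtain ⟨p, hp⟩ := associatedPrimes.nonempty R (N ⧸ LinearMap.range φ)
  haveI : p.IsPrime := hp.isPrime
  obtain ⟨-, x, hx⟩ := isAssociatedPrime_iff.mp hp
  obtain ⟨n, rfl⟩ := Submodule.Quotient.mk_surjective _ x
  have hrange : ∀ z : R, z ∈ p ↔ z • n ∈ LinearMap.range φ := by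
    intro z
    rw [hx, ← aux_mem_ann, Submodule.mem_annihilator_span_singleton, ← Submodule.Quotient.mk_smul,
      Submodule.Quotient.mk_eq_zero]
  set R' := Localization.AtPrime p with hR'
  set M' := LocalizedModule p.primeCompl M with hM'
  set N' := LocalizedModule p.primeCompl N with hN'
  set ψ : M' →ₗ[R'] N' := LocalizedModule.map p.primeCompl φ with hψ
  set ν : N' := LocalizedModule.mk n 1 with hν
  -- ν is not in the range of ψ
  have hνnot : ν ∉ LinearMap.range ψ := by
    rintro ⟨m', hm'⟩
    have : ∀ m'' : M', ψ m'' = ν → False := by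
      intro m'' hm''
      induction m'' using LocalizedModule.induction_on with
      | h m s =>
        rw [hψ, LocalizedModule.map_mk, hν, LocalizedModule.mk_eq] at hm''
        obtain ⟨u, hu⟩ := hm''
        simp only [one_smul, Submonoid.smul_def] at hu
        have : ((u : R) * (s : R)) • n ∈ LinearMap.range φ := by
          refine ⟨(u : R) • m, ?_⟩
          rw [map_smul, hu, mul_smul]
        have hps : ((u : R) * (s : R)) ∈ p := (hrange _).mpr this
        exact (u * s).2 hps
    exact this m' hm'
  -- the maximal ideal multiplies ν into the range of ψ
  have hmul : ∀ ζ ∈ IsLocalRing.maximalIdeal R', ζ • ν ∈ LinearMap.range ψ := by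
    have hle : IsLocalRing.maximalIdeal R' ≤
        (LinearMap.range ψ).comap (LinearMap.toSpanSingleton R' N' ν) := by
      rw [← Localization.AtPrime.map_eq_maximalIdeal, Ideal.map_le_iff_le_comap]
      intro z hz
      rw [Ideal.mem_comap, Submodule.mem_comap, LinearMap.toSpanSingleton_apply,
        algebraMap_smul]
      obtain ⟨m, hm⟩ := (hrange z).mp hz
      refine ⟨LocalizedModule.mk m 1, ?_⟩
      rw [hψ, LocalizedModule.map_mk, hm, hν, LocalizedModule.smul'_mk]
    intro ζ hζ
    exact hle hζ
  -- dimension dichotomy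
  by_cases hd : ringKrullDim (Localization.AtPrime p) ≤ (1 : WithBot ℕ∞)
  · -- small dimension: φ_p is surjective, contradiction with ν ∉ range ψ
    obtain ⟨m', hm'⟩ := (hloc p hd).surjective ν
    exact hνnot ⟨m', hm'⟩
  · -- dimension at least 2
    have h2d : (2 : WithBot ℕ∞) ≤ ringKrullDim (Localization.AtPrime p) :=
      aux_two_le (lt_of_not_ge hd)
    -- depth of M' is at least 2
    have hdM : ((2 : ℕ) : ℕ∞) ≤ moduleDepth R' M' := by
      have hmin := hM p
      rw [min_eq_left (by exact_mod_cast h2d)] at hmin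
      exact WithBot.coe_le_coe.mp hmin
    -- depth of N' is at least 1
    have hdN : ((1 : ℕ) : ℕ∞) ≤ moduleDepth R' N' := by
      have hmin := hN p
      rw [min_eq_left (le_trans (by norm_num) h2d)] at hmin
      exact WithBot.coe_le_coe.mp hmin
    obtain ⟨rs, hmem, hreg, hlen⟩ := aux_exists_seq R' M' 2 (by norm_num)
      (by exact_mod_cast hdM)
    match rs, hmem, hreg, hlen with
    | a :: b :: t, hmem, hreg, _ =>
    obtain ⟨rs', hmem', hreg', hlen'⟩ := aux_exists_seq R' N' 1 (by norm_num)
      (by exact_mod_cast hdN)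
    match rs', hmem', hreg', hlen' with
    | r :: t', hmem', hreg', _ =>
    have ha : IsSMulRegular M' a :=
      ((RingTheory.Sequence.isWeaklyRegular_cons_iff M' a (b :: t)).mp hreg).1
    have hb : IsSMulRegular (QuotSMulTop a M') b :=
      ((RingTheory.Sequence.isWeaklyRegular_cons_iff (QuotSMulTop a M') b t).mp
        ((RingTheory.Sequence.isWeaklyRegular_cons_iff M' a (b :: t)).mp hreg).2).1
    have hr : IsSMulRegular N' r :=
      ((RingTheory.Sequence.isWeaklyRegular_cons_iff N' r t').mp hreg').1
    have hψinj : Function.Injective ⇑ψ := LocalizedModule.map_injective _ φ hinj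
    obtain ⟨α, hα⟩ := hmul a (hmem a (by simp))
    obtain ⟨β, hβ⟩ := hmul b (hmem b (by simp))
    obtain ⟨ρ, hρ⟩ := hmul r (hmem' r (by simp))
    have hba : b • α = a • β := by
      apply hψinj
      rw [map_smul, map_smul, hα, hβ, smul_comm]
    have h3 : (Submodule.Quotient.mk α : QuotSMulTop a M') = 0 := by
      apply hb
      show b • (Submodule.Quotient.mk α : QuotSMulTop a M') = b • 0
      rw [smul_zero, ← Submodule.Quotient.mk_smul, hba, Submodule.Quotient.mk_eq_zero]
      exact Submodule.smul_mem_pointwise_smul β a ⊤ trivial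
    have h4 : α ∈ (a • ⊤ : Submodule R' M') := (Submodule.Quotient.mk_eq_zero _).mp h3
    rw [← SetLike.mem_coe, Submodule.coe_pointwise_smul, Set.mem_smul_set] at h4
    obtain ⟨γ, -, hγ⟩ := h4
    have h5 : a • (ν - ψ γ) = 0 := by
      rw [smul_sub, ← map_smul, hγ, hα, sub_self]
    have h6 : ρ = r • γ := by
      have h7 : ψ (a • (ρ - r • γ)) = 0 := by
        rw [map_smul, map_sub, map_smul, hρ, ← smul_sub, smul_comm a r, h5, smul_zero]
      have h8 : a • (ρ - r • γ) = 0 := by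
        apply hψinj
        rw [h7, map_zero]
      have := ha (show a • (ρ - r • γ) = a • 0 by rw [h8, smul_zero])
      rwa [sub_eq_zero] at this
    have h9 : r • (ν - ψ γ) = 0 := by
      rw [smul_sub, ← map_smul, ← h6, hρ, sub_self]
    have h10 : ν = ψ γ := by
      have := hr (show r • (ν - ψ γ) = r • 0 by rw [h9, smul_zero])
      rwa [sub_eq_zero] at this
    exact hνnot ⟨γ, h10.symm⟩
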